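/- Let ỹ ∈ ℂⁿ be f-sparse with ‖ỹ‖₂ = 1 and b_k(ỹ) = Σ_j conj(ỹ_j)ỹ_{j+k} its autocorrelation. Then Σ_k |b_k(ỹ)|² ≤ f, i.e. the ℓ² norm of the autocorrelation of a unit-norm f-sparse vector is at most √f. -/

import Mathlib

open scoped ComplexConjugate

/-- Zero extension of a vector in `ℂⁿ` to a sequence on `ℤ`. -/
noncomputable def ext (n : ℕ) (x : Fin n → ℂ) : ℤ → ℂ :=
  fun k => ∑ i : Fin n, if ((i : ℕ) : ℤ) = k then x i else 0

/-- Autocorrelation coefficients `b_k(ỹ) = ∑_j conj(ỹ_j) ỹ_{j+k}` of `ỹ ∈ ℂⁿ`. -/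
noncomputable def autocorr (n : ℕ) (y : Fin n → ℂ) (k : ℤ) : ℂ :=
  ∑' j : ℤ, conj (ext n y j) * ext n y (j + k)

lemma ext_coe (n : ℕ) (x : Fin n → ℂ) (i : Fin n) : ext n x ((i : ℕ) : ℤ) = x i := by
  unfold ext
  rw [Finset.sum_eq_single i]
  · simp
  · intro b _ hb
    rw [if_neg]
    intro h
    exact hb (Fin.ext (by exact_mod_cast h))
  · simp

lemma ext_eq_zero (n : ℕ) (x : Fin n → ℂ) (m : ℤ)
    (h : ∀ i : Fin n, ((i : ℕ) : ℤ) ≠ m) : ext n x m = 0 := by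
  unfold ext
  exact Finset.sum_eq_zero fun i _ => if_neg (h i)

lemma autocorr_eq (n : ℕ) (y : Fin n → ℂ) (k : ℤ) :
    autocorr n y k = ∑ i : Fin n, conj (y i) * ext n y ((i : ℕ) + k) := by
  unfold autocorr
  rw [tsum_eq_sum (s := Finset.image (fun i : Fin n => ((i : ℕ) : ℤ)) Finset.univ)]
  · rw [Finset.sum_image (by intro a _ b _ h; exact Fin.ext (by exact_mod_cast (show ((a : ℕ) : ℤ) = ((b : ℕ) : ℤ) from h)))]
    exact Finset.sum_congr rfl fun i _ => by rw [ext_coe]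
  · intro j hj
    rw [ext_eq_zero n y j, map_zero, zero_mul]
    intro i hi
    exact hj (Finset.mem_image.2 ⟨i, Finset.mem_univ i, hi⟩)

lemma sum_sq_ext_le (n : ℕ) (y : Fin n → ℂ) (T : Finset ℤ) :
    ∑ m ∈ T, ‖ext n y m‖ ^ 2 ≤ ∑ i, ‖y i‖ ^ 2 := by
  classical
  set F : Finset ℤ := Finset.image (fun i : Fin n => ((i : ℕ) : ℤ)) Finset.univ with hF
  calc ∑ m ∈ T, ‖ext n y m‖ ^ 2
      ≤ ∑ m ∈ T ∪ F, ‖ext n y m‖ ^ 2 :=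
        Finset.sum_le_sum_of_subset_of_nonneg Finset.subset_union_left
          (fun _ _ _ => by positivity)
    _ = ∑ m ∈ F, ‖ext n y m‖ ^ 2 := by
        refine (Finset.sum_subset Finset.subset_union_right ?_).symm
        intro m _ hm
        rw [ext_eq_zero n y m (fun i hi => hm (Finset.mem_image.2 ⟨i, Finset.mem_univ i, hi⟩))]
        simp
    _ = ∑ i, ‖y i‖ ^ 2 := by
        rw [hF, Finset.sum_image (by intro a _ b _ h; exact Fin.ext (by exact_mod_cast (show ((a : ℕ) : ℤ) = ((b : ℕ) : ℤ) from h)))]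
        exact Finset.sum_congr rfl fun i _ => by rw [ext_coe]

/-- The ℓ² norm of the autocorrelation of a unit-norm `f`-sparse vector is at
most `√f`, i.e. `∑ₖ |bₖ(ỹ)|² ≤ f`. -/
theorem autocorr_l2_le_sparsity
    (n f : ℕ) (y : Fin n → ℂ)
    (hsparse : ∃ S : Finset (Fin n), S.card ≤ f ∧ ∀ j ∉ S, y j = 0)
    (hy : ∑ j, ‖y j‖ ^ 2 = 1) :
    (∑' k : ℤ, ‖autocorr n y k‖ ^ 2) ≤ f := by
  classical
  obtain ⟨S, hScard, hS0⟩ := hsparse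
  set K : Finset ℤ := Finset.Icc (-(n : ℤ)) n with hK
  -- the autocorrelation vanishes outside K
  have hvanish : ∀ k ∉ K, ‖autocorr n y k‖ ^ 2 = 0 := by
    intro k hk
    have : autocorr n y k = 0 := by
      rw [autocorr_eq]
      refine Finset.sum_eq_zero fun i _ => ?_
      rw [ext_eq_zero n y _ (fun i' hi' => ?_), mul_zero]
      have h1 : (i' : ℕ) < n := i'.isLt
      have h2 : (i : ℕ) < n := i.isLt
      rw [hK, Finset.mem_Icc] at hk
      omega
    rw [this]
    simp
  rw [tsum_eq_sum (s := K) hvanish]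
  -- restrict the autocorrelation sum to S
  have hrestrict : ∀ k : ℤ,
      autocorr n y k = ∑ i ∈ S, conj (y i) * ext n y ((i : ℕ) + k) := by
    intro k
    rw [autocorr_eq]
    refine (Finset.sum_subset (Finset.subset_univ S) ?_).symm
    intro i _ hi
    rw [hS0 i hi, map_zero, zero_mul]
  -- pointwise Cauchy–Schwarz bound
  have hpt : ∀ k : ℤ, ‖autocorr n y k‖ ^ 2 ≤
      (S.card : ℝ) * ∑ i ∈ S, ‖y i‖ ^ 2 * ‖ext n y ((i : ℕ) + k)‖ ^ 2 := by
    intro k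
    have h1 : ‖autocorr n y k‖ ≤
        ∑ i ∈ S, ‖y i‖ * ‖ext n y ((i : ℕ) + k)‖ := by
      rw [hrestrict k]
      refine le_trans (by simpa using norm_sum_le S fun i => conj (y i) * ext n y ((i : ℕ) + k)) ?_
      refine le_of_eq (Finset.sum_congr rfl fun i _ => ?_)
      simp
    have h2 : ‖autocorr n y k‖ ^ 2 ≤
        (∑ i ∈ S, ‖y i‖ * ‖ext n y ((i : ℕ) + k)‖) ^ 2 := by
      apply pow_le_pow_left₀ (norm_nonneg _) h1
    refine h2.trans ?_
    refine (sq_sum_le_card_mul_sum_sq).trans_eq ?_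
    congr 1
    exact Finset.sum_congr rfl fun i _ => by rw [mul_pow]
  calc ∑ k ∈ K, ‖autocorr n y k‖ ^ 2
      ≤ ∑ k ∈ K, (S.card : ℝ) *
          ∑ i ∈ S, ‖y i‖ ^ 2 * ‖ext n y ((i : ℕ) + k)‖ ^ 2 :=
        Finset.sum_le_sum fun k _ => hpt k
    _ = (S.card : ℝ) * ∑ i ∈ S, ‖y i‖ ^ 2 *
          ∑ k ∈ K, ‖ext n y ((i : ℕ) + k)‖ ^ 2 := by
        rw [← Finset.mul_sum, Finset.sum_comm]
        congr 1
        exact Finset.sum_congr rfl fun i _ => by rw [Finset.mul_sum]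
    _ ≤ (S.card : ℝ) * ∑ i ∈ S, ‖y i‖ ^ 2 * 1 := by
        refine mul_le_mul_of_nonneg_left (Finset.sum_le_sum fun i _ => ?_) (by positivity)
        refine mul_le_mul_of_nonneg_left ?_ (by positivity)
        have : ∑ k ∈ K, ‖ext n y ((i : ℕ) + k)‖ ^ 2
            = ∑ m ∈ K.map (addLeftEmbedding ((i : ℕ) : ℤ)), ‖ext n y m‖ ^ 2 := by
          rw [Finset.sum_map]
          rfl
        rw [this, ← hy]
        exact sum_sq_ext_le n y _
    _ ≤ (f : ℝ) * 1 := by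
        have h1 : ∑ i ∈ S, ‖y i‖ ^ 2 * 1 ≤ 1 := by
          simp only [mul_one]
          rw [← hy]
          exact Finset.sum_le_sum_of_subset_of_nonneg (Finset.subset_univ S)
            (fun _ _ _ => by positivity)
        calc (S.card : ℝ) * ∑ i ∈ S, ‖y i‖ ^ 2 * 1
            ≤ (S.card : ℝ) * 1 := mul_le_mul_of_nonneg_left h1 (by positivity)
          _ ≤ (f : ℝ) * 1 := by
              apply mul_le_mul_of_nonneg_right _ zero_le_one
              exact_mod_cast hScard
    _ = f := mul_one _
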